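/- The order ≺ on dimension functions is dense: if f, h ∈ 𝒟 satisfy f ≺ h, then there exists g ∈ 𝒟 with f ≺ g and g ≺ h. -/

import Mathlib

open Set Metric Filter Topology
open scoped ENNReal

/-- `h` is a dimension function: continuous and nondecreasing on `(0,∞)`, positive
there, and tending to `0` as `t → 0⁺`. -/
def IsDimFun (h : ℝ → ℝ) : Prop :=
  ContinuousOn h (Ioi 0) ∧ MonotoneOn h (Ioi 0) ∧ (∀ t, 0 < t → 0 < h t) ∧
    Tendsto h (𝓝[>] (0:ℝ)) (𝓝 0)

/-- `g ≺ h` : `g` is a smaller dimension than `h`, i.e. `lim_{t→0⁺} h(t)/g(t) = 0`. -/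
def DimLT (g h : ℝ → ℝ) : Prop :=
  Tendsto (fun t => h t / g t) (𝓝[>] (0:ℝ)) (𝓝 0)

/-- `h ∈ 𝒟_d`: `h` is a doubling, at most `d`-dimensional dimension function. -/
def IsDimFunD (d : ℕ) (h : ℝ → ℝ) : Prop :=
  IsDimFun h ∧ (∃ c₀ > (0:ℝ), ∀ t > (0:ℝ), t ^ d ≤ c₀ * h t) ∧
    ∃ c₁ > (0:ℝ), ∀ t > (0:ℝ), h (2 * t) ≤ c₁ * h t

/-- `P_δ^h(E)`: supremum of `∑ h(|Bᵢ|)` over countable `δ`-packings of `E`, where a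
`δ`-packing is a countable collection of pairwise disjoint open balls centered at
points of `E` with diameters (`= 2r`) less than `δ`. -/
noncomputable def packingPre (d : ℕ) (h : ℝ → ℝ) (δ : ℝ)
    (E : Set (EuclideanSpace ℝ (Fin d))) : ℝ≥0∞ :=
  ⨆ (c : ℕ → EuclideanSpace ℝ (Fin d)) (r : ℕ → ℝ) (s : Set ℕ)
    (_ : ∀ i ∈ s, c i ∈ E) (_ : ∀ i ∈ s, 0 < r i) (_ : ∀ i ∈ s, 2 * r i < δ)
    (_ : s.PairwiseDisjoint fun i => ball (c i) (r i)),
    ∑' i : s, ENNReal.ofReal (h (2 * r (i : ℕ)))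

/-- The packing premeasure `P_0^h(E) = inf_{δ>0} P_δ^h(E)`. -/
noncomputable def packingPre0 (d : ℕ) (h : ℝ → ℝ)
    (E : Set (EuclideanSpace ℝ (Fin d))) : ℝ≥0∞ :=
  ⨅ (δ : ℝ) (_ : 0 < δ), packingPre d h δ E

/-- The packing measure `𝒫^h(E)`. -/
noncomputable def packingMeasure (d : ℕ) (h : ℝ → ℝ)
    (E : Set (EuclideanSpace ℝ (Fin d))) : ℝ≥0∞ :=
  ⨅ (F : ℕ → Set (EuclideanSpace ℝ (Fin d))) (_ : E ⊆ ⋃ j, F j),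
    ∑' j, packingPre0 d h (F j)

/-- `E` has non-σ-finite `𝒫^h` measure: `E` is not a countable union of sets of
finite `𝒫^h` measure. -/
def NonSigmaFinitePacking (d : ℕ) (h : ℝ → ℝ)
    (E : Set (EuclideanSpace ℝ (Fin d))) : Prop :=
  ¬ ∃ F : ℕ → Set (EuclideanSpace ℝ (Fin d)),
      E ⊆ ⋃ j, F j ∧ ∀ j, packingMeasure d h (F j) < ⊤

/-- `A ⊆ ℝ^d` is analytic: a continuous image of `ℕ^ℕ`. -/
def IsAnalyticSet' (d : ℕ) (A : Set (EuclideanSpace ℝ (Fin d))) : Prop :=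
  ∃ φ : (ℕ → ℕ) → EuclideanSpace ℝ (Fin d), Continuous φ ∧ A = Set.range φ

/-- the order `≺` on dimension functions is dense. -/
theorem dimLT_dense (f h : ℝ → ℝ) (hf : IsDimFun f) (hh : IsDimFun h)
    (hlt : DimLT f h) :
    ∃ g : ℝ → ℝ, IsDimFun g ∧ DimLT f g ∧ DimLT g h := by
  obtain ⟨hfc, hfm, hfp, hf0⟩ := hf
  obtain ⟨hhc, hhm, hhp, hh0⟩ := hh
  refine ⟨fun t => Real.sqrt (f t * h t), ⟨?_, ?_, ?_, ?_⟩, ?_, ?_⟩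
  · exact (hfc.mul hhc).sqrt
  · intro a ha b hb hab
    exact Real.sqrt_le_sqrt (mul_le_mul (hfm ha hb hab) (hhm ha hb hab)
      (hhp a ha).le (hfp b hb).le)
  · intro t ht
    exact Real.sqrt_pos.mpr (mul_pos (hfp t ht) (hhp t ht))
  · have : Tendsto (fun t => f t * h t) (𝓝[>] (0:ℝ)) (𝓝 0) := by
      simpa using hf0.mul hh0
    exact (Real.continuous_sqrt.tendsto' 0 0 Real.sqrt_zero).comp this
  · have key : Tendsto (fun t => Real.sqrt (h t / f t)) (𝓝[>] (0:ℝ)) (𝓝 0) :=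
      (Real.continuous_sqrt.tendsto' 0 0 Real.sqrt_zero).comp hlt
    refine key.congr' ?_
    filter_upwards [self_mem_nhdsWithin] with t ht
    have hft := hfp t ht
    have hs : Real.sqrt (f t) * Real.sqrt (f t) = f t := Real.mul_self_sqrt hft.le
    have hsp : (0:ℝ) < Real.sqrt (f t) := Real.sqrt_pos.mpr hft
    rw [Real.sqrt_div (hhp t ht).le, Real.sqrt_mul hft.le,
      div_eq_div_iff hsp.ne' hft.ne']
    linear_combination (-Real.sqrt (h t)) * hs
  · have key : Tendsto (fun t => Real.sqrt (h t / f t)) (𝓝[>] (0:ℝ)) (𝓝 0) :=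
      (Real.continuous_sqrt.tendsto' 0 0 Real.sqrt_zero).comp hlt
    refine key.congr' ?_
    filter_upwards [self_mem_nhdsWithin] with t ht
    have hft := hfp t ht
    have hht := hhp t ht
    have hsf : Real.sqrt (f t) * Real.sqrt (f t) = f t := Real.mul_self_sqrt hft.le
    have hsh : Real.sqrt (h t) * Real.sqrt (h t) = h t := Real.mul_self_sqrt hht.le
    have hsfp : (0:ℝ) < Real.sqrt (f t) := Real.sqrt_pos.mpr hft
    rw [Real.sqrt_div hht.le, Real.sqrt_mul hft.le,
      div_eq_div_iff hsfp.ne' (mul_pos hsfp (Real.sqrt_pos.mpr hht)).ne']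
    linear_combination Real.sqrt (f t) * hsh
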